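/- Let a, b ∈ ℂ \ {0} with 2|b| < |a|, and let f(ζ) = a ζ + b ζ². Then f restricted to the unit circle S¹ is injective, so γ := f(S¹) is a Jordan curve; let Γ denote the bounded connected component of ℂ \ γ. Then for z ∈ ℂ, the two roots (with multiplicity) of b ζ² + a ζ − z = 0 satisfy: (i) if z ∈ Γ, then exactly one root lies in the open unit disc D(0,1) and the other lies in ℂ \ closure(D(0,1)); (ii) if z ∈ γ, then one root lies on S¹ and the other lies in ℂ \ closure(D(0,1)); (iii) if z lies in the unbounded component ℂ \ closure(Γ ∪ γ), then both roots lie in ℂ \ closure(D(0,1)). -/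

import Mathlib

noncomputable section

open Complex Set Metric Bornology

private lemma other_root_big {a b x y : ℂ} (hb : b ≠ 0)
    (h : 2 * ‖b‖ < ‖a‖)
    (hsum : a = -b * (x + y)) (hx : ‖x‖ ≤ 1) : 1 < ‖y‖ := by
  have hB : 0 < ‖b‖ := norm_pos_iff.mpr hb
  have h1 : ‖a‖ = ‖b‖ * ‖x + y‖ := by
    rw [hsum]; simp [map_mul]
  have h2 : ‖x + y‖ ≤ ‖x‖ + ‖y‖ := norm_add_le x y
  nlinarith

private lemma normSq_add_smul (v u : ℂ) (s : ℝ) :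
    Complex.normSq (v + ↑s * u) =
      Complex.normSq v + s ^ 2 * Complex.normSq u + 2 * s * (v * (starRingEnd ℂ) u).re := by
  simp only [Complex.normSq_apply, Complex.add_re, Complex.add_im, Complex.mul_re,
    Complex.mul_im, Complex.conj_re, Complex.conj_im, Complex.ofReal_re, Complex.ofReal_im]
  ring

private lemma re_mul_conj_I_self (c : ℂ) : (c * (starRingEnd ℂ) (Complex.I * c)).re = 0 := by
  simp only [map_mul, Complex.conj_I, Complex.mul_re, Complex.mul_im, Complex.neg_re,
    Complex.neg_im, Complex.I_re, Complex.I_im, Complex.conj_re, Complex.conj_im]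
  ring

private lemma ray_unbounded (a b : ℂ) (ha : a ≠ 0) (hb : b ≠ 0) {z w : ℂ}
    (hfw : a * w + b * w ^ 2 = z)
    (h1 : 1 < ‖w‖) (h2 : 1 < ‖w + a / b‖) :
    ¬ Bornology.IsBounded (connectedComponentIn
      ((fun ζ : ℂ => a * ζ + b * ζ ^ 2) '' Metric.sphere (0 : ℂ) 1)ᶜ z) := by
  set c : ℂ := a / b with hc
  have hcne : c ≠ 0 := div_ne_zero ha hb
  have hc0 : (c * (starRingEnd ℂ) (Complex.I * c)).re = 0 := re_mul_conj_I_self c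
  obtain ⟨u, hnu, hwu, hcu⟩ : ∃ u : ℂ, Complex.normSq u = Complex.normSq (Complex.I * c) ∧
      0 ≤ (w * (starRingEnd ℂ) u).re ∧ (c * (starRingEnd ℂ) u).re = 0 := by
    rcases le_or_gt 0 ((w * (starRingEnd ℂ) (Complex.I * c)).re) with hcase | hcase
    · exact ⟨Complex.I * c, rfl, hcase, hc0⟩
    · refine ⟨-(Complex.I * c), by simp, ?_, ?_⟩
      · simp only [map_neg, mul_neg, Complex.neg_re]; linarith
      · simp only [map_neg, mul_neg, Complex.neg_re, hc0, neg_zero]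
  have hupos : 0 < Complex.normSq u := by
    rw [hnu]; exact Complex.normSq_pos.mpr (mul_ne_zero Complex.I_ne_zero hcne)
  set W : ℝ → ℂ := fun t => w + ↑t * u with hW
  -- growth and avoidance facts
  have hWbig : ∀ t : ℝ, 0 ≤ t → 1 < ‖W t‖ ∧
      t ^ 2 * Complex.normSq u ≤ Complex.normSq (W t) := by
    intro t ht
    have hid := normSq_add_smul w u t
    have hns : 1 < Complex.normSq (W t) := by
      have : 1 < Complex.normSq w := by
        rw [← Complex.sq_norm]; nlinarith
      have hcross : 0 ≤ 2 * t * (w * (starRingEnd ℂ) u).re := by positivity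
      nlinarith [sq_nonneg t]
    constructor
    · have := Complex.sq_norm (W t)
      nlinarith [norm_nonneg (W t)]
    · have hcross : 0 ≤ 2 * t * (w * (starRingEnd ℂ) u).re := by positivity
      have hnsw : 0 ≤ Complex.normSq w := Complex.normSq_nonneg w
      rw [hW]; dsimp only; rw [hid] at *; nlinarith
  have hWcbig : ∀ t : ℝ, 0 ≤ t → 1 < ‖W t + c‖ := by
    intro t ht
    have hid : Complex.normSq (W t + c) =
        Complex.normSq (w + c) + t ^ 2 * Complex.normSq u +
          2 * t * ((w + c) * (starRingEnd ℂ) u).re := by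
      have : W t + c = (w + c) + ↑t * u := by rw [hW]; ring
      rw [this, normSq_add_smul]
    have hre : ((w + c) * (starRingEnd ℂ) u).re = (w * (starRingEnd ℂ) u).re := by
      rw [add_mul, Complex.add_re, hcu, add_zero]
    have h1' : 1 < Complex.normSq (w + c) := by
      rw [← Complex.sq_norm]; nlinarith
    have hns : 1 < Complex.normSq (W t + c) := by
      rw [hid, hre]
      have hcross : 0 ≤ 2 * t * (w * (starRingEnd ℂ) u).re := by positivity
      nlinarith [sq_nonneg t]
    have := Complex.sq_norm (W t + c)
    nlinarith [norm_nonneg (W t + c)]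
  set Z : ℝ → ℂ := fun t => a * W t + b * (W t) ^ 2 with hZ
  have hZnotK : ∀ t : ℝ, 0 ≤ t →
      Z t ∉ (fun ζ : ℂ => a * ζ + b * ζ ^ 2) '' Metric.sphere (0 : ℂ) 1 := by
    rintro t ht ⟨η, hηs, hηf⟩
    have hηabs : ‖η‖ = 1 := by
      exact mem_sphere_zero_iff_norm.mp hηs
    have hηf' : a * η + b * η ^ 2 = a * W t + b * (W t) ^ 2 := hηf
    have hfactor : (η - W t) * (a + b * (η + W t)) = 0 := by linear_combination hηf'
    rcases mul_eq_zero.mp hfactor with hcase | hcase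
    · have : η = W t := sub_eq_zero.mp hcase
      rw [this] at hηabs
      exact absurd hηabs (ne_of_gt (hWbig t ht).1)
    · have hWc : W t + c = -η := by
        rw [hc]; field_simp; linear_combination hcase
      have := hWcbig t ht
      rw [hWc, norm_neg, hηabs] at this
      exact lt_irrefl 1 this
  have hcont : Continuous Z := by
    rw [hZ, hW]; fun_prop
  set P : Set ℂ := Z '' Set.Ici 0 with hP
  have hPconn : IsPreconnected P := isPreconnected_Ici.image Z hcont.continuousOn
  have hzP : z ∈ P := by
    refine ⟨0, Set.self_mem_Ici, ?_⟩
    rw [hZ, hW]; simpa using hfw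
  have hPsub : P ⊆ ((fun ζ : ℂ => a * ζ + b * ζ ^ 2) '' Metric.sphere (0 : ℂ) 1)ᶜ := by
    rintro y ⟨t, ht, rfl⟩; exact hZnotK t ht
  have hPC : P ⊆ connectedComponentIn
      ((fun ζ : ℂ => a * ζ + b * ζ ^ 2) '' Metric.sphere (0 : ℂ) 1)ᶜ z :=
    hPconn.subset_connectedComponentIn hzP hPsub
  intro hbdd
  obtain ⟨R, hR⟩ := isBounded_iff_forall_norm_le.mp hbdd
  have hzR : ‖z‖ ≤ R := hR z (hPC hzP)
  have hR0 : 0 ≤ R := le_trans (norm_nonneg z) hzR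
  have hBpos : 0 < ‖b‖ := norm_pos_iff.mpr hb
  have huabs : 0 < ‖u‖ := by
    exact norm_pos_iff.mpr (fun h0 => by simp [h0] at hupos)
  set t₀ : ℝ := (‖a‖ + R + 1) / (‖b‖ * ‖u‖) with ht₀def
  have ht₀ : 0 ≤ t₀ := by positivity
  have hM2 : (t₀ * ‖u‖) ^ 2 ≤ (‖W t₀‖) ^ 2 := by
    have := (hWbig t₀ ht₀).2
    rw [Complex.sq_norm]
    calc (t₀ * ‖u‖) ^ 2 = t₀ ^ 2 * (‖u‖) ^ 2 := by ring
    _ = t₀ ^ 2 * Complex.normSq u := by rw [Complex.sq_norm]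
    _ ≤ _ := this
  have hM : t₀ * ‖u‖ ≤ ‖W t₀‖ := by
    nlinarith [norm_nonneg (W t₀), mul_nonneg ht₀ huabs.le]
  set M : ℝ := ‖W t₀‖ with hMdef
  have hM1 : 1 < M := (hWbig t₀ ht₀).1
  have hMb : ‖a‖ + R + 1 ≤ ‖b‖ * M := by
    have : t₀ * ‖u‖ = (‖a‖ + R + 1) / ‖b‖ := by
      rw [ht₀def]; field_simp
    rw [this] at hM
    rw [div_le_iff₀ hBpos] at hM
    linarith [hM]
  have hZnorm : ‖b‖ * M ^ 2 - ‖a‖ * M ≤ ‖Z t₀‖ := by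
    have h1 : ‖b * (W t₀) ^ 2‖ = ‖b‖ * M ^ 2 := by
      rw [norm_mul, norm_pow]
    have h2 : ‖a * W t₀‖ = ‖a‖ * M := by
      rw [norm_mul]
    have h3 : ‖b * (W t₀) ^ 2‖ ≤ ‖Z t₀‖ + ‖a * W t₀‖ := by
      have : b * (W t₀) ^ 2 = Z t₀ - a * W t₀ := by rw [hZ]; ring
      rw [this]; exact norm_sub_le _ _
    linarith
  have hZle : ‖Z t₀‖ ≤ R := hR (Z t₀) (hPC ⟨t₀, ht₀, rfl⟩)
  nlinarith

private lemma F_analytic (a b : ℂ) :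
    AnalyticOnNhd ℂ (fun ζ : ℂ => a * ζ + b * ζ ^ 2) Set.univ :=
  (analyticOnNhd_const.mul analyticOnNhd_id).add
    (analyticOnNhd_const.mul (analyticOnNhd_id.pow 2))

private lemma inside_bounded (a b : ℂ) (ha : a ≠ 0) (hb : b ≠ 0) {z w : ℂ}
    (hw : ‖w‖ < 1) (hfw : a * w + b * w ^ 2 = z)
    (hzK : z ∉ (fun ζ : ℂ => a * ζ + b * ζ ^ 2) '' Metric.sphere (0 : ℂ) 1) :
    Bornology.IsBounded (connectedComponentIn
      ((fun ζ : ℂ => a * ζ + b * ζ ^ 2) '' Metric.sphere (0 : ℂ) 1)ᶜ z) := by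
  set F : ℂ → ℂ := fun ζ : ℂ => a * ζ + b * ζ ^ 2 with hF
  have hopen : ∀ s ⊆ Set.univ, IsOpen s → IsOpen (F '' s) := by
    rcases (F_analytic a b).is_constant_or_isOpen isPreconnected_univ with ⟨v, hv⟩ | hgood
    · exfalso
      have e1 := hv 1 (Set.mem_univ _)
      have e2 := hv (-1) (Set.mem_univ _)
      exact ha (by linear_combination (e1 - e2) / 2)
    · exact hgood
  have hUopen : IsOpen (F '' Metric.ball (0 : ℂ) 1) :=
    hopen _ (Set.subset_univ _) Metric.isOpen_ball
  have hcompact : IsCompact (F '' Metric.closedBall (0 : ℂ) 1) :=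
    (isCompact_closedBall (0 : ℂ) 1).image (by rw [hF]; fun_prop)
  have hVopen : IsOpen (F '' Metric.closedBall (0 : ℂ) 1)ᶜ :=
    hcompact.isClosed.isOpen_compl
  set C := connectedComponentIn (F '' Metric.sphere (0 : ℂ) 1)ᶜ z with hC
  have hzC : z ∈ C := mem_connectedComponentIn hzK
  have hCsub : C ⊆ (F '' Metric.sphere (0 : ℂ) 1)ᶜ := connectedComponentIn_subset _ _
  have hcover : C ⊆ F '' Metric.ball (0 : ℂ) 1 ∪ (F '' Metric.closedBall (0 : ℂ) 1)ᶜ := by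
    intro y hy
    by_cases hy2 : y ∈ F '' Metric.closedBall (0 : ℂ) 1
    · left
      obtain ⟨ζ, hζ, rfl⟩ := hy2
      have hζ1 : ‖ζ‖ ≤ 1 := by
        exact mem_closedBall_zero_iff.mp hζ
      have hζne : ‖ζ‖ ≠ 1 := by
        intro heq
        exact hCsub hy ⟨ζ, mem_sphere_zero_iff_norm.mpr (by rw [heq]), rfl⟩
      exact ⟨ζ, mem_ball_zero_iff.mpr (by exact lt_of_le_of_ne hζ1 hζne), rfl⟩
    · right; exact hy2
  have hCU : C ⊆ F '' Metric.closedBall (0 : ℂ) 1 := by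
    intro y hy
    by_contra hyV
    obtain ⟨p, hp⟩ := isPreconnected_connectedComponentIn
      (F '' Metric.ball (0 : ℂ) 1) (F '' Metric.closedBall (0 : ℂ) 1)ᶜ hUopen hVopen hcover
      ⟨z, hzC, ⟨w, mem_ball_zero_iff.mpr (by exact hw), hfw⟩⟩
      ⟨y, hy, hyV⟩
    exact hp.2.2 (Set.image_mono Metric.ball_subset_closedBall hp.2.1)
  exact hcompact.isBounded.subset hCU

theorem roots_location_PII (a b : ℂ) (ha : a ≠ 0) (hb : b ≠ 0)
    (h : 2 * ‖b‖ < ‖a‖) :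
    Set.InjOn (fun ζ : ℂ => a * ζ + b * ζ ^ 2) (Metric.sphere (0 : ℂ) 1) ∧
    ∀ z ζp ζm : ℂ,
      (∀ ζ : ℂ, b * ζ ^ 2 + a * ζ - z = b * (ζ - ζp) * (ζ - ζm)) →
      (z ∉ (fun ζ : ℂ => a * ζ + b * ζ ^ 2) '' Metric.sphere (0 : ℂ) 1 →
        Bornology.IsBounded (connectedComponentIn
          ((fun ζ : ℂ => a * ζ + b * ζ ^ 2) '' Metric.sphere (0 : ℂ) 1)ᶜ z) →
        (‖ζp‖ < 1 ∧ 1 < ‖ζm‖) ∨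
        (‖ζm‖ < 1 ∧ 1 < ‖ζp‖)) ∧
      (z ∈ (fun ζ : ℂ => a * ζ + b * ζ ^ 2) '' Metric.sphere (0 : ℂ) 1 →
        (‖ζp‖ = 1 ∧ 1 < ‖ζm‖) ∨
        (‖ζm‖ = 1 ∧ 1 < ‖ζp‖)) ∧
      (z ∉ (fun ζ : ℂ => a * ζ + b * ζ ^ 2) '' Metric.sphere (0 : ℂ) 1 →
        ¬ Bornology.IsBounded (connectedComponentIn
          ((fun ζ : ℂ => a * ζ + b * ζ ^ 2) '' Metric.sphere (0 : ℂ) 1)ᶜ z) →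
        1 < ‖ζp‖ ∧ 1 < ‖ζm‖) := by
  constructor
  · -- injectivity on the circle
    intro ζ₁ h₁ ζ₂ h₂ heq
    have h₁' : ‖ζ₁‖ = 1 := by
      exact mem_sphere_zero_iff_norm.mp h₁
    have h₂' : ‖ζ₂‖ = 1 := by
      exact mem_sphere_zero_iff_norm.mp h₂
    have heq' : a * ζ₁ + b * ζ₁ ^ 2 = a * ζ₂ + b * ζ₂ ^ 2 := heq
    have hfactor : (ζ₁ - ζ₂) * (a + b * (ζ₁ + ζ₂)) = 0 := by linear_combination heq'
    rcases mul_eq_zero.mp hfactor with hcase | hcase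
    · exact sub_eq_zero.mp hcase
    · exfalso
      have hsum : a = -b * (ζ₁ + ζ₂) := by linear_combination hcase
      have := other_root_big hb h hsum h₁'.le
      rw [h₂'] at this
      exact lt_irrefl 1 this
  · intro z ζp ζm hfac
    have hsum : a = -b * (ζp + ζm) := by linear_combination (hfac 1) - (hfac 0)
    have hsum' : a = -b * (ζm + ζp) := by rw [hsum]; ring
    have hfp : a * ζp + b * ζp ^ 2 = z := by linear_combination (hfac ζp)
    have hfm : a * ζm + b * ζm ^ 2 = z := by linear_combination (hfac ζm)
    have hroot : ∀ ζ : ℂ, a * ζ + b * ζ ^ 2 = z → ζ = ζp ∨ ζ = ζm := by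
      intro ζ hζ
      have h0 : b * (ζ - ζp) * (ζ - ζm) = 0 := by
        rw [← hfac ζ]; linear_combination hζ
      rcases mul_eq_zero.mp h0 with h0' | h0'
      · rcases mul_eq_zero.mp h0' with h0'' | h0''
        · exact absurd h0'' hb
        · exact Or.inl (sub_eq_zero.mp h0'')
      · exact Or.inr (sub_eq_zero.mp h0')
    have hKp : ‖ζp‖ = 1 →
        z ∈ (fun ζ : ℂ => a * ζ + b * ζ ^ 2) '' Metric.sphere (0 : ℂ) 1 := fun e =>
      ⟨ζp, mem_sphere_zero_iff_norm.mpr (by rw [e]), hfp⟩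
    have hKm : ‖ζm‖ = 1 →
        z ∈ (fun ζ : ℂ => a * ζ + b * ζ ^ 2) '' Metric.sphere (0 : ℂ) 1 := fun e =>
      ⟨ζm, mem_sphere_zero_iff_norm.mpr (by rw [e]), hfm⟩
    have hpc : ζp + a / b = -ζm := by field_simp; linear_combination hsum
    have hmc : ζm + a / b = -ζp := by field_simp; linear_combination hsum
    refine ⟨?_, ?_, ?_⟩
    · -- bounded component case
      intro hzK hbdd
      rcases lt_or_ge (‖ζp‖) 1 with hp | hp
      · exact Or.inl ⟨hp, other_root_big hb h hsum hp.le⟩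
      · rcases lt_or_ge (‖ζm‖) 1 with hm | hm
        · exact Or.inr ⟨hm, other_root_big hb h hsum' hm.le⟩
        · exfalso
          have hp1 : 1 < ‖ζp‖ := lt_of_le_of_ne hp (fun e => hzK (hKp e.symm))
          have hm1 : 1 < ‖ζm‖ := lt_of_le_of_ne hm (fun e => hzK (hKm e.symm))
          exact ray_unbounded a b ha hb hfp hp1
            (by rw [hpc, norm_neg]; exact hm1) hbdd
    · -- on the curve
      rintro ⟨η, hηs, hηf⟩
      have hηabs : ‖η‖ = 1 := by
        exact mem_sphere_zero_iff_norm.mp hηs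
      rcases hroot η hηf with rfl | rfl
      · exact Or.inl ⟨hηabs, other_root_big hb h hsum hηabs.le⟩
      · exact Or.inr ⟨hηabs, other_root_big hb h hsum' hηabs.le⟩
    · -- unbounded component case
      intro hzK hnb
      constructor
      · rcases lt_trichotomy (‖ζp‖) 1 with hp | hp | hp
        · exact absurd (inside_bounded a b ha hb hp hfp hzK) hnb
        · exact absurd (hKp hp) hzK
        · exact hp
      · rcases lt_trichotomy (‖ζm‖) 1 with hm | hm | hm
        · exact absurd (inside_bounded a b ha hb hm hfm hzK) hnb
        · exact absurd (hKm hm) hzK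
        · exact hm
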